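/- Let Ω ⊆ ℝ^d be open and (u_ε)_{ε∈(0,1]} a moderate family of smooth functions on Ω. Then the following are equivalent: (a) there exists a negligible family (n_ε) such that (u_ε − n_ε) is of total slow scale type: for every compact K ⊆ Ω, every real s > 0 and every l ∈ ℕ, p_{K,l}(u_ε − n_ε) = o(ε^{−s}) as ε → 0; (b) for every x ∈ Ω and every real r > 0 there exist an open neighbourhood V ⊆ Ω of x and f ∈ C^∞(V) such that ε^r u_ε|_V → f in C^∞(V) as ε → 0. -/

import Mathlib

open Real Topology

noncomputable section

/-- Euclidean `d`-space. -/
abbrev Euc (d : ℕ) : Type := EuclideanSpace ℝ (Fin d)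

/-- Partial derivative in the `i`-th coordinate direction. -/
noncomputable def pderivE {d : ℕ} (i : Fin d) (f : Euc d → ℝ) : Euc d → ℝ :=
  fun x => fderiv ℝ f x (EuclideanSpace.single i (1 : ℝ))

/-- Iterated partial derivative `∂^α` along a list of coordinate directions
(a multi-index `α`, with `|α| = α.length`). -/
noncomputable def mderiv {d : ℕ} : List (Fin d) → (Euc d → ℝ) → Euc d → ℝ
  | [], f => f
  | i :: α, f => pderivE i (mderiv α f)

/-- A moderate family `(u_ε)_{ε ∈ (0,1]}` of smooth functions on `Ω`. -/
def Moderate {d : ℕ} (Ω : Set (Euc d)) (u : ℝ → Euc d → ℝ) : Prop :=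
  ∀ K ⊆ Ω, IsCompact K → ∀ l : ℕ, ∃ N : ℕ, ∃ C : ℝ, ∃ ε₀ > (0:ℝ),
    ∀ ε : ℝ, 0 < ε → ε < ε₀ → ∀ α : List (Fin d), α.length ≤ l →
      ∀ x ∈ K, |mderiv α (u ε) x| ≤ C * ε ^ (-(N : ℝ))

/-- A negligible family `(u_ε)_{ε ∈ (0,1]}` of smooth functions on `Ω`. -/
def Negligible {d : ℕ} (Ω : Set (Euc d)) (u : ℝ → Euc d → ℝ) : Prop :=
  ∀ K ⊆ Ω, IsCompact K → ∀ l m : ℕ, ∃ C : ℝ, ∃ ε₀ > (0:ℝ),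
    ∀ ε : ℝ, 0 < ε → ε < ε₀ → ∀ α : List (Fin d), α.length ≤ l →
      ∀ x ∈ K, |mderiv α (u ε) x| ≤ C * ε ^ (m : ℝ)

open Metric Set

lemma mderiv_zero {d : ℕ} (α : List (Fin d)) : mderiv α (fun _ => (0:ℝ)) = fun _ => 0 := by
  induction α with
  | nil => rfl
  | cons i α ih =>
    show pderivE i (mderiv α fun _ => (0:ℝ)) = _
    rw [ih]
    funext x
    simp [pderivE, fderiv_const]

lemma contDiffOn_mderiv {d : ℕ} {S : Set (Euc d)} (hS : IsOpen S) {g : Euc d → ℝ}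
    (hg : ContDiffOn ℝ (⊤ : ℕ∞) g S) (α : List (Fin d)) :
    ContDiffOn ℝ (⊤ : ℕ∞) (mderiv α g) S := by
  induction α with
  | nil => exact hg
  | cons i α ih =>
    show ContDiffOn ℝ (⊤ : ℕ∞) (pderivE i (mderiv α g)) S
    exact (ih.fderiv_of_isOpen hS (by exact_mod_cast le_top)).clm_apply contDiffOn_const

lemma mderiv_differentiableAt {d : ℕ} {S : Set (Euc d)} (hS : IsOpen S) {g : Euc d → ℝ}
    (hg : ContDiffOn ℝ (⊤ : ℕ∞) g S) (α : List (Fin d)) {x : Euc d} (hx : x ∈ S) :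
    DifferentiableAt ℝ (mderiv α g) x :=
  ((contDiffOn_mderiv hS hg α).differentiableOn (by simp)).differentiableAt
    (hS.mem_nhds hx)

lemma mderiv_sub {d : ℕ} {S : Set (Euc d)} (hS : IsOpen S) {g h : Euc d → ℝ}
    (hg : ContDiffOn ℝ (⊤ : ℕ∞) g S) (hh : ContDiffOn ℝ (⊤ : ℕ∞) h S) (α : List (Fin d)) :
    ∀ x ∈ S, mderiv α (fun y => g y - h y) x = mderiv α g x - mderiv α h x := by
  induction α with
  | nil => intro x _; rfl
  | cons i α ih =>
    intro x hx
    show pderivE i (mderiv α fun y => g y - h y) x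
      = pderivE i (mderiv α g) x - pderivE i (mderiv α h) x
    have heq : mderiv α (fun y => g y - h y) =ᶠ[nhds x] fun y => mderiv α g y - mderiv α h y :=
      Filter.eventuallyEq_of_mem (hS.mem_nhds hx) ih
    unfold pderivE
    rw [heq.fderiv_eq, fderiv_fun_sub (mderiv_differentiableAt hS hg α hx)
      (mderiv_differentiableAt hS hh α hx)]
    simp

lemma mderiv_const_mul {d : ℕ} {S : Set (Euc d)} (hS : IsOpen S) {g : Euc d → ℝ}
    (hg : ContDiffOn ℝ (⊤ : ℕ∞) g S) (c : ℝ) (α : List (Fin d)) :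
    ∀ x ∈ S, mderiv α (fun y => c * g y) x = c * mderiv α g x := by
  induction α with
  | nil => intro x _; rfl
  | cons i α ih =>
    intro x hx
    show pderivE i (mderiv α fun y => c * g y) x = c * pderivE i (mderiv α g) x
    have heq : mderiv α (fun y => c * g y) =ᶠ[nhds x] fun y => c * mderiv α g y :=
      Filter.eventuallyEq_of_mem (hS.mem_nhds hx) ih
    unfold pderivE
    rw [heq.fderiv_eq, fderiv_const_mul (mderiv_differentiableAt hS hg α hx)]
    simp


/-- A moderate family `(u_ε)` on `Ω` differs by a negligible family
from a family of total slow scale type iff, locally around each point of `Ω` and for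
every `r > 0`, `ε^r·u_ε` converges in `C^∞` to a smooth function. -/
theorem stmt17 {d : ℕ} (Ω : Set (Euc d)) (hΩ : IsOpen Ω)
    (u : ℝ → Euc d → ℝ)
    (husmooth : ∀ ε ∈ Set.Ioc (0:ℝ) 1, ContDiffOn ℝ (⊤ : ℕ∞) (u ε) Ω)
    (humod : Moderate Ω u) :
    (∃ nf : ℝ → Euc d → ℝ,
      (∀ ε ∈ Set.Ioc (0:ℝ) 1, ContDiffOn ℝ (⊤ : ℕ∞) (nf ε) Ω) ∧
      Negligible Ω nf ∧
      -- `(u_ε − n_ε)` is of total slow scale type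
      (∀ K ⊆ Ω, IsCompact K → ∀ s : ℝ, 0 < s → ∀ l : ℕ,
        ∀ c > (0:ℝ), ∃ ε₀ > (0:ℝ), ∀ ε : ℝ, 0 < ε → ε < ε₀ →
          ∀ α : List (Fin d), α.length ≤ l → ∀ x ∈ K,
            |mderiv α (fun y => u ε y - nf ε y) x| ≤ c * ε ^ (-s))) ↔
    (∀ x ∈ Ω, ∀ r : ℝ, 0 < r → ∃ V : Set (Euc d), IsOpen V ∧ x ∈ V ∧ V ⊆ Ω ∧
      ∃ f : Euc d → ℝ, ContDiffOn ℝ (⊤ : ℕ∞) f V ∧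
        -- `ε^r·u_ε → f` in `C^∞(V)`
        ∀ K ⊆ V, IsCompact K → ∀ α : List (Fin d), ∀ δ > (0:ℝ), ∃ ε₀ > (0:ℝ),
          ∀ ε : ℝ, 0 < ε → ε < ε₀ → ∀ y ∈ K,
            |mderiv α (fun z => ε ^ r * u ε z) y - mderiv α f y| ≤ δ) := by
  constructor
  · rintro ⟨nf, hnfsmooth, hnfneg, hslow⟩ x hx r hr
    refine ⟨Ω, hΩ, hx, subset_rfl, fun _ => 0, contDiffOn_const, ?_⟩
    intro K hKΩ hKc α δ hδ
    obtain ⟨ε₁, hε₁, h1⟩ := hslow K hKΩ hKc (r/2) (half_pos hr) α.length (δ/2) (half_pos hδ)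
    obtain ⟨C, ε₂, hε₂, h2⟩ := hnfneg K hKΩ hKc α.length 1
    set C' := max C 1 with hC'def
    have hC'pos : (0:ℝ) < C' := lt_of_lt_of_le one_pos (le_max_right _ _)
    refine ⟨min ε₁ (min ε₂ (min 1 (δ / (2 * C')))), by positivity, ?_⟩
    intro ε hε hεlt y hy
    have hε1 : ε < ε₁ := hεlt.trans_le (min_le_left _ _)
    have hε2 : ε < ε₂ := hεlt.trans_le ((min_le_right _ _).trans (min_le_left _ _))
    have hεle1 : ε ≤ 1 :=
      (hεlt.trans_le ((min_le_right _ _).trans ((min_le_right _ _).trans (min_le_left _ _)))).le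
    have hεδ : ε ≤ δ / (2 * C') :=
      (hεlt.trans_le ((min_le_right _ _).trans ((min_le_right _ _).trans (min_le_right _ _)))).le
    have husm := husmooth ε ⟨hε, hεle1⟩
    have hnsm := hnfsmooth ε ⟨hε, hεle1⟩
    have hyΩ : y ∈ Ω := hKΩ hy
    have e1 : mderiv α (fun z => ε ^ r * u ε z) y = ε ^ r * mderiv α (u ε) y :=
      mderiv_const_mul hΩ husm _ α y hyΩ
    have e0 : mderiv α (fun _ : Euc d => (0:ℝ)) y = 0 := by rw [mderiv_zero]
    have e2 : mderiv α (fun z => u ε z - nf ε z) y = mderiv α (u ε) y - mderiv α (nf ε) y :=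
      mderiv_sub hΩ husm hnsm α y hyΩ
    have hd := h1 ε hε hε1 α le_rfl y hy
    have hn' : |mderiv α (nf ε) y| ≤ C' * ε := by
      calc |mderiv α (nf ε) y| ≤ C * ε ^ ((1:ℕ):ℝ) := h2 ε hε hε2 α le_rfl y hy
        _ = C * ε := by norm_num
        _ ≤ C' * ε := mul_le_mul_of_nonneg_right (le_max_left _ _) hε.le
    have hA : |mderiv α (u ε) y| ≤ δ/2 * ε ^ (-(r/2)) + C' * ε := by
      have hrw : mderiv α (u ε) y
          = mderiv α (fun z => u ε z - nf ε z) y + mderiv α (nf ε) y := by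
        rw [e2]; ring
      rw [hrw]
      exact (abs_add_le _ _).trans (add_le_add hd hn')
    rw [e1, e0, sub_zero, abs_mul, abs_of_nonneg (Real.rpow_nonneg hε.le r)]
    have key1 : ε ^ r * ε ^ (-(r/2)) = ε ^ (r/2) := by
      rw [← Real.rpow_add hε]; ring_nf
    have hb1 : ε ^ (r/2) ≤ 1 := Real.rpow_le_one hε.le hεle1 (by positivity)
    have hb2 : ε ^ r ≤ 1 := Real.rpow_le_one hε.le hεle1 hr.le
    have hεr0 : (0:ℝ) ≤ ε ^ r := Real.rpow_nonneg hε.le r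
    calc ε ^ r * |mderiv α (u ε) y| ≤ ε ^ r * (δ/2 * ε ^ (-(r/2)) + C' * ε) :=
          mul_le_mul_of_nonneg_left hA hεr0
      _ = δ/2 * (ε ^ r * ε ^ (-(r/2))) + ε ^ r * (C' * ε) := by ring
      _ = δ/2 * ε ^ (r/2) + ε ^ r * (C' * ε) := by rw [key1]
      _ ≤ δ/2 * 1 + 1 * (C' * ε) := by
          have h1' : δ/2 * ε ^ (r/2) ≤ δ/2 * 1 :=
            mul_le_mul_of_nonneg_left hb1 (by linarith)
          have h2' : ε ^ r * (C' * ε) ≤ 1 * (C' * ε) :=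
            mul_le_mul_of_nonneg_right hb2 (by positivity)
          linarith
      _ ≤ δ/2 + C' * (δ / (2 * C')) := by
          have := mul_le_mul_of_nonneg_left hεδ hC'pos.le
          linarith
      _ = δ := by field_simp; ring
  · intro h
    refine ⟨fun _ _ => 0, fun ε _ => contDiffOn_const, ?_, ?_⟩
    · intro K hK hKc l m
      refine ⟨0, 1, one_pos, ?_⟩
      intro ε hε hε1 α hα x hx
      show |mderiv α (fun _ => (0:ℝ)) x| ≤ _
      rw [mderiv_zero]
      simp
    · intro K hKΩ hKc s hs l c hc
      have hr : 0 < s/2 := half_pos hs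
      set r := s/2 with hrdef
      have step1 : ∀ x₀ ∈ K, ∃ ρ > (0:ℝ),
          ∀ᶠ ε in 𝓝[>] (0:ℝ), ∀ α : List (Fin d), α.length ≤ l →
            ∀ y ∈ closedBall x₀ ρ, |mderiv α (u ε) y| ≤ c * ε ^ (-s) := by
        intro x₀ hx₀
        obtain ⟨V, hVopen, hx₀V, hVΩ, f, hf, hconv⟩ := h x₀ (hKΩ hx₀) r hr
        obtain ⟨ρ', hρ', hball⟩ := Metric.isOpen_iff.1 hVopen x₀ hx₀V
        have hcb : closedBall x₀ (ρ'/2) ⊆ V :=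
          (closedBall_subset_ball (by linarith)).trans hball
        refine ⟨ρ'/2, by positivity, ?_⟩
        have hfin : {α : List (Fin d) | α.length ≤ l}.Finite := List.finite_length_le (Fin d) l
        refine hfin.eventually_all.2 ?_
        intro α hα
        obtain ⟨M, hM⟩ := (isCompact_closedBall x₀ (ρ'/2)).exists_bound_of_continuousOn
          (((contDiffOn_mderiv hVopen hf α).continuousOn).mono hcb)
        set M' := max M 0 with hM'def
        have hM'0 : (0:ℝ) ≤ M' := le_max_right _ _
        obtain ⟨ε₀, hε₀, hcv⟩ :=
          hconv (closedBall x₀ (ρ'/2)) hcb (isCompact_closedBall _ _) α 1 one_pos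
        set A := c / (M' + 1) with hAdef
        have hA : 0 < A := div_pos hc (by linarith)
        set b := min 1 (A ^ r⁻¹) with hbdef
        have hb : 0 < b := lt_min one_pos (Real.rpow_pos_of_pos hA _)
        filter_upwards [Ioo_mem_nhdsGT_of_mem
          (show (0:ℝ) ∈ Set.Ico 0 (min ε₀ b) from ⟨le_refl 0, lt_min hε₀ hb⟩)] with ε hεmem
        obtain ⟨hεpos, hεlt⟩ := hεmem
        have hεε₀ : ε < ε₀ := hεlt.trans_le (min_le_left _ _)
        have hεb : ε < b := hεlt.trans_le (min_le_right _ _)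
        have hεle1 : ε ≤ 1 := (hεb.trans_le (min_le_left _ _)).le
        intro y hy
        have hyΩ : y ∈ Ω := hVΩ (hcb hy)
        have e1 : mderiv α (fun z => ε ^ r * u ε z) y = ε ^ r * mderiv α (u ε) y :=
          mderiv_const_mul hΩ (husmooth ε ⟨hεpos, hεle1⟩) _ α y hyΩ
        have hcv' := hcv ε hεpos hεε₀ y hy
        rw [e1] at hcv'
        have hfb := hM y hy
        rw [Real.norm_eq_abs] at hfb
        have hεr0 : (0:ℝ) ≤ ε ^ r := Real.rpow_nonneg hεpos.le r
        have hDb : ε ^ r * |mderiv α (u ε) y| ≤ M' + 1 := by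
          have habs : |ε ^ r * mderiv α (u ε) y| ≤ M' + 1 := by
            calc |ε ^ r * mderiv α (u ε) y|
                ≤ |ε ^ r * mderiv α (u ε) y - mderiv α f y| + |mderiv α f y| := by
                  have := abs_add_le (ε ^ r * mderiv α (u ε) y - mderiv α f y) (mderiv α f y)
                  simpa using this
              _ ≤ 1 + M' := add_le_add hcv' (hfb.trans (le_max_left _ _))
              _ = M' + 1 := by ring
          rwa [abs_mul, abs_of_nonneg hεr0] at habs
        have hεrA : ε ^ r ≤ A := by
          calc ε ^ r ≤ b ^ r := Real.rpow_le_rpow hεpos.le hεb.le hr.le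
            _ ≤ (A ^ r⁻¹) ^ r := Real.rpow_le_rpow hb.le (min_le_right _ _) hr.le
            _ = A := Real.rpow_inv_rpow hA.le hr.ne'
        have hεnr : (0:ℝ) < ε ^ (-r) := Real.rpow_pos_of_pos hεpos _
        have hmul : ε ^ (-r) * ε ^ r = 1 := by
          rw [← Real.rpow_add hεpos]; norm_num
        have hgoal1 : |mderiv α (u ε) y| ≤ ε ^ (-r) * (M' + 1) := by
          have h' := mul_le_mul_of_nonneg_left hDb hεnr.le
          rwa [← mul_assoc, hmul, one_mul] at h'
        have hgoal2 : M' + 1 ≤ ε ^ (-r) * c := by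
          have h1' : ε ^ r * (M' + 1) ≤ c := by
            rw [hAdef, le_div_iff₀ (by linarith : (0:ℝ) < M' + 1)] at hεrA
            linarith [hεrA]
          have h' := mul_le_mul_of_nonneg_left h1' hεnr.le
          rwa [← mul_assoc, hmul, one_mul] at h'
        have hs2 : ε ^ (-s) = ε ^ (-r) * ε ^ (-r) := by
          rw [← Real.rpow_add hεpos]; congr 1; rw [hrdef]; ring
        rw [hs2]
        calc |mderiv α (u ε) y| ≤ ε ^ (-r) * (M' + 1) := hgoal1
          _ ≤ ε ^ (-r) * (ε ^ (-r) * c) := mul_le_mul_of_nonneg_left hgoal2 hεnr.le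
          _ = c * (ε ^ (-r) * ε ^ (-r)) := by ring
      choose! ρ hρpos hev using step1
      have hcover : K ⊆ ⋃ x₀ ∈ K, ball x₀ (ρ x₀) :=
        fun x hx => Set.mem_biUnion hx (mem_ball_self (hρpos x hx))
      obtain ⟨t, htK, htfin, htcov⟩ :=
        hKc.elim_finite_subcover_image (fun x _ => isOpen_ball) hcover
      have hev' : ∀ᶠ ε in 𝓝[>] (0:ℝ), ∀ x₀ ∈ t, ∀ α : List (Fin d), α.length ≤ l →
          ∀ y ∈ closedBall x₀ (ρ x₀), |mderiv α (u ε) y| ≤ c * ε ^ (-s) :=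
        htfin.eventually_all.2 (fun x₀ hx₀ => hev x₀ (htK hx₀))
      rw [Filter.eventually_iff] at hev'
      obtain ⟨ε₀, hε₀, hIoo⟩ := mem_nhdsGT_iff_exists_Ioo_subset.1 hev'
      refine ⟨ε₀, hε₀, ?_⟩
      intro ε hε hεlt α hα x hx
      obtain ⟨x₀, hx₀t, hxball⟩ : ∃ x₀ ∈ t, x ∈ ball x₀ (ρ x₀) := by
        have := htcov hx
        simpa using this
      have key : ε ∈ {ε : ℝ | ∀ x₀ ∈ t, ∀ α : List (Fin d), α.length ≤ l →
          ∀ y ∈ closedBall x₀ (ρ x₀), |mderiv α (u ε) y| ≤ c * ε ^ (-s)} :=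
        hIoo ⟨hε, hεlt⟩
      have h1 : mderiv α (fun y => u ε y - (0:ℝ)) x = mderiv α (u ε) x := by
        congr 1; funext z; ring
      show |mderiv α (fun y => u ε y - (0:ℝ)) x| ≤ c * ε ^ (-s)
      rw [h1]
      exact key x₀ hx₀t α hα x (ball_subset_closedBall hxball)


end
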